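/- The curl operator is injective on the space {x ↦ (x − x_K) × q(x) : q ∈ P_{k−1}(ℝ³;ℝ³)} of vector polynomials, for any point x_K ∈ ℝ³ and any positive integer k. -/

import Mathlib

open MeasureTheory

noncomputable section

abbrev V3 := Fin 3 → ℝ

def pd (i : Fin 3) (f : V3 → ℝ) (x : V3) : ℝ := fderiv ℝ f x (Pi.single i 1)

def grad (f : V3 → ℝ) (x : V3) : V3 := fun i => pd i f x

def curl (v : V3 → V3) (x : V3) : V3 :=
  ![pd 1 (fun y => v y 2) x - pd 2 (fun y => v y 1) x,
    pd 2 (fun y => v y 0) x - pd 0 (fun y => v y 2) x,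
    pd 0 (fun y => v y 1) x - pd 1 (fun y => v y 0) x]

def divg (v : V3 → V3) (x : V3) : ℝ := ∑ i, pd i (fun y => v y i) x

def cross3 (a b : V3) : V3 :=
  ![a 1 * b 2 - a 2 * b 1, a 2 * b 0 - a 0 * b 2, a 0 * b 1 - a 1 * b 0]

def dot3 (a b : V3) : ℝ := ∑ i, a i * b i

def IsPolyDeg (k : ℕ) (f : V3 → ℝ) : Prop :=
  ∃ p : MvPolynomial (Fin 3) ℝ, p.totalDegree ≤ k ∧ ∀ x, f x = MvPolynomial.eval x p

def IsPolyDegV (k : ℕ) (v : V3 → V3) : Prop := ∀ i, IsPolyDeg k fun x => v x i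

def Wmem (k : ℕ) (xK : V3) (v : V3 → V3) : Prop :=
  ∃ q r, IsPolyDeg (k + 1) q ∧ IsPolyDegV 1 r ∧ ∀ x, v x = grad q x + cross3 (x - xK) (r x)

def T2 : Set (ℝ × ℝ) := {p | 0 ≤ p.1 ∧ 0 ≤ p.2 ∧ p.1 + p.2 ≤ 1}

def PoincareOp (xK : V3) (q : V3 → V3) (x : V3) : V3 :=
  - cross3 (x - xK) (∫ t in (0:ℝ)..1, t • q (t • (x - xK) + xK))

open MvPolynomial

lemma hasFDerivAt_mveval (p : MvPolynomial (Fin 3) ℝ) (x : V3) :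
    HasFDerivAt (fun y : V3 => eval y p)
      (∑ j : Fin 3, eval x (pderiv j p) • (ContinuousLinearMap.proj j : V3 →L[ℝ] ℝ)) x := by
  induction p using MvPolynomial.induction_on with
  | C a =>
      simpa using hasFDerivAt_const a x
  | add p q hp hq =>
      have h := hp.add hq
      have e1 : (fun y : V3 => eval y (p + q)) = fun y : V3 => eval y p + eval y q := by
        funext y; simp
      rw [e1]
      refine h.congr_fderiv ?_
      ext v
      simp [Fin.sum_univ_three]
      ring
  | mul_X p i hp =>
      have hproj := (ContinuousLinearMap.proj i : V3 →L[ℝ] ℝ).hasFDerivAt (x := x)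
      have h := hp.mul hproj
      have e1 : (fun y : V3 => eval y (p * X i)) = fun y : V3 => eval y p * y i := by
        funext y; simp
      rw [e1]
      refine h.congr_fderiv ?_
      ext v
      fin_cases i <;>
        simp [Fin.sum_univ_three, pderiv_mul, pderiv_X, Pi.single_apply] <;> ring

lemma pd_mveval (p : MvPolynomial (Fin 3) ℝ) (j : Fin 3) (x : V3) :
    pd j (fun y => eval y p) x = eval x (pderiv j p) := by
  rw [pd, (hasFDerivAt_mveval p x).fderiv]
  fin_cases j <;> simp [Fin.sum_univ_three, Pi.single_apply]

lemma eval_eq_zero_of_euler (P : MvPolynomial (Fin 3) ℝ) (xK : V3)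
    (hE : ∀ y : V3, (∑ j, (y j - xK j) * eval y (pderiv j P)) + eval y P = 0) :
    ∀ x, eval x P = 0 := by
  intro x
  set f : V3 → ℝ := fun y => eval y P with hf
  set l : ℝ → V3 := fun t => xK + t • (x - xK) with hl
  have hg : ∀ t : ℝ, HasDerivAt (fun t => t * f (l t)) 0 t := by
    intro t
    have hlt : HasDerivAt l (x - xK) t := by
      simpa [hl] using ((hasDerivAt_id t).smul_const (x - xK)).const_add xK
    have hfd := (hasFDerivAt_mveval P (l t)).comp_hasDerivAt t hlt
    have hmul := (hasDerivAt_id t).mul hfd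
    refine hmul.congr_deriv ?_
    have key := hE (l t)
    simp only [hl, Fin.sum_univ_three, Pi.add_apply, Pi.smul_apply, Pi.sub_apply,
      smul_eq_mul, ContinuousLinearMap.sum_apply, ContinuousLinearMap.smul_apply,
      ContinuousLinearMap.proj_apply, ContinuousLinearMap.add_apply,
      Function.comp, id] at key ⊢
    linear_combination key
  have hconst := is_const_of_deriv_eq_zero (f := fun t : ℝ => t * f (l t))
    (fun t => (hg t).differentiableAt) (fun t => (hg t).deriv) 1 0
  have hl1 : l 1 = x := by funext j; simp [hl]
  simpa [hl1] using hconst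

def cP (a : V3) (j : Fin 3) : MvPolynomial (Fin 3) ℝ := X j - C (a j)

def crossP (a : V3) (s : Fin 3 → MvPolynomial (Fin 3) ℝ) : Fin 3 → MvPolynomial (Fin 3) ℝ :=
  ![cP a 1 * s 2 - cP a 2 * s 1, cP a 2 * s 0 - cP a 0 * s 2, cP a 0 * s 1 - cP a 1 * s 0]

def curlP (U : Fin 3 → MvPolynomial (Fin 3) ℝ) : Fin 3 → MvPolynomial (Fin 3) ℝ :=
  ![pderiv 1 (U 2) - pderiv 2 (U 1), pderiv 2 (U 0) - pderiv 0 (U 2),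
    pderiv 0 (U 1) - pderiv 1 (U 0)]

lemma keyidentity (a : V3) (s : Fin 3 → MvPolynomial (Fin 3) ℝ) (i : Fin 3) :
    (∑ j, cP a j * pderiv j (crossP a s i)) + crossP a s i
      = -(crossP a (curlP (crossP a s)) i) := by
  fin_cases i <;>
    simp [crossP, curlP, cP, Fin.sum_univ_three, pderiv_mul, pderiv_X_self,
      pderiv_X_of_ne, map_sub, pderiv_C] <;> ring

lemma curl_eval (xK : V3) (s : Fin 3 → MvPolynomial (Fin 3) ℝ) (rr : V3 → V3)
    (hs : ∀ i x, rr x i = eval x (s i)) (x : V3) (i : Fin 3) :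
    curl (fun y => cross3 (y - xK) (rr y)) x i = eval x (curlP (crossP xK s) i) := by
  have hc : ∀ m : Fin 3,
      (fun y : V3 => cross3 (y - xK) (rr y) m) = fun y => eval y (crossP xK s m) := by
    intro m; funext y
    fin_cases m <;> simp [cross3, crossP, cP, hs] <;> ring
  fin_cases i <;>
    simp only [curl, curlP, Matrix.cons_val_zero, Matrix.cons_val_one, Matrix.head_cons,
      Matrix.cons_val_two, Matrix.tail_cons, map_sub, Fin.isValue] <;>
    simp only [hc, pd_mveval] <;> simp [map_sub]

/-- curl is injective on {x ↦ (x − x_K) × q(x) : q ∈ P_{k−1}(ℝ³;ℝ³)}, k ≥ 1. -/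
theorem stmt1 (k : ℕ) (hk : 0 < k) (xK : V3) (r r' : V3 → V3)
    (hr : IsPolyDegV (k - 1) r) (hr' : IsPolyDegV (k - 1) r')
    (h : ∀ x, curl (fun y => cross3 (y - xK) (r y)) x
            = curl (fun y => cross3 (y - xK) (r' y)) x) :
    ∀ x, cross3 (x - xK) (r x) = cross3 (x - xK) (r' x) := by
  choose p hdeg hev using hr
  choose p' hdeg' hev' using hr'
  set q : Fin 3 → MvPolynomial (Fin 3) ℝ := fun j => p j - p' j with hq
  have hsub : ∀ i, crossP xK q i = crossP xK p i - crossP xK p' i := by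
    intro i; fin_cases i <;> simp [crossP, hq] <;> ring
  have hcsub : ∀ i, curlP (crossP xK q) i
      = curlP (crossP xK p) i - curlP (crossP xK p') i := by
    intro i; fin_cases i <;> simp [curlP, hsub, map_sub] <;> ring
  have hz : ∀ (x : V3) (i : Fin 3), eval x (curlP (crossP xK q) i) = 0 := by
    intro x i
    rw [hcsub, map_sub, ← curl_eval xK p r hev x i, ← curl_eval xK p' r' hev' x i,
      h x, sub_self]
  have hE : ∀ i : Fin 3, ∀ y : V3,
      (∑ j, (y j - xK j) * eval y (pderiv j (crossP xK q i))) + eval y (crossP xK q i) = 0 := by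
    intro i y
    have hk2 := congrArg (eval y) (keyidentity xK q i)
    simp only [map_add, map_sum, map_mul, map_neg, map_sub, eval_X, eval_C, cP] at hk2
    have hrhs : eval y (crossP xK (curlP (crossP xK q)) i) = 0 := by
      set W := curlP (crossP xK q) with hW
      have hzW : ∀ m, eval y (W m) = 0 := hz y
      fin_cases i <;> simp [crossP, hzW]
    rw [hrhs] at hk2
    simpa using hk2
  have hzero : ∀ (i : Fin 3) (x : V3), eval x (crossP xK q i) = 0 := fun i x =>
    eval_eq_zero_of_euler (crossP xK q i) xK (hE i) x
  intro x
  funext i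
  have e1 : cross3 (x - xK) (r x) i = eval x (crossP xK p i) := by
    fin_cases i <;> simp [cross3, crossP, cP, hev] <;> ring
  have e2 : cross3 (x - xK) (r' x) i = eval x (crossP xK p' i) := by
    fin_cases i <;> simp [cross3, crossP, cP, hev'] <;> ring
  have e3 := hzero i x
  rw [hsub, map_sub] at e3
  rw [e1, e2]
  linarith
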